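/- For k ∈ (−π, π] let λ₀(k) = (2cos k)/3, λ₁(k) = (2cos k)/3 + (ξ(k) − 1/ξ(k))/3, λ₂(k) = (2cos k)/3 + (1/6)((−1 + i√3)ξ(k) + (1 + i√3)/ξ(k)) and λ₃(k) = conjugate of λ₂(k), where ξ(k) = (2cos k + √(4cos²k + 1))^{1/3}, and set α_n = ∫_{−π/2}^{π/2} λ₁(k)^n dk. Let g₀, g₁, g₂, g₃ be continuous 2π-periodic functions on ℝ (continuous functions on the circle (−π,π]). Then: (1) lim_{n→∞} (1/α_n) ∫_{−π}^{π} (g₀(k)λ₀(k)^n + g₂(k)λ₂(k)^n + g₃(k)λ₃(k)^n) dk = 0; (2) lim_{n→∞} (1/α_{2n}) ∫_{−π}^{π} g₁(k) λ₁(k)^{2n} dk = g₁(0) + g₁(π); (3) lim_{n→∞} (1/α_{2n−1}) ∫_{−π}^{π} g₁(k) λ₁(k)^{2n−1} dk = g₁(0) − g₁(π). -/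

import Mathlib

open MeasureTheory Filter

/-- `ξ(k) = (2cos k + √(4cos²k + 1))^{1/3}`. -/
noncomputable def xiFun (k : ℝ) : ℝ :=
  (2 * Real.cos k + Real.sqrt (4 * Real.cos k ^ 2 + 1)) ^ ((1 : ℝ) / 3)

/-- The eigenvalue `λ₀(k) = 2cos k / 3`. -/
noncomputable def lam0 (k : ℝ) : ℝ := 2 * Real.cos k / 3

/-- The eigenvalue `λ₁(k) = 2cos k / 3 + (ξ(k) - 1/ξ(k))/3`. -/
noncomputable def lam1 (k : ℝ) : ℝ := 2 * Real.cos k / 3 + (xiFun k - 1 / xiFun k) / 3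

/-- The eigenvalue `λ₂(k) = 2cos k / 3 + (1/6)((-1+i√3)ξ(k) + (1+i√3)/ξ(k))`. -/
noncomputable def lam2 (k : ℝ) : ℂ :=
  2 * (Real.cos k : ℂ) / 3 +
    (1 / 6 : ℂ) * ((-1 + Complex.I * (Real.sqrt 3 : ℂ)) * (xiFun k : ℂ) +
      (1 + Complex.I * (Real.sqrt 3 : ℂ)) / (xiFun k : ℂ))

/-- The eigenvalue `λ₃(k)`, the complex conjugate of `λ₂(k)`. -/
noncomputable def lam3 (k : ℝ) : ℂ := starRingEnd ℂ (lam2 k)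

/-- The scaling constants `α_n = ∫_{-π/2}^{π/2} λ₁(k)^n dk`. -/
noncomputable def alphaScale (n : ℕ) : ℝ :=
  ∫ k in (-(Real.pi / 2))..(Real.pi / 2), lam1 k ^ n

lemma base_pos (k : ℝ) : 0 < 2 * Real.cos k + Real.sqrt (4 * Real.cos k ^ 2 + 1) := by
  have h1 : Real.sqrt (4 * Real.cos k ^ 2) < Real.sqrt (4 * Real.cos k ^ 2 + 1) := by
    apply Real.sqrt_lt_sqrt (by positivity); linarith
  have h2 : Real.sqrt (4 * Real.cos k ^ 2) = 2 * |Real.cos k| := by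
    rw [show (4:ℝ) * Real.cos k ^ 2 = (2 * |Real.cos k|)^2 by rw [mul_pow, sq_abs]; ring]
    exact Real.sqrt_sq (by positivity)
  nlinarith [neg_abs_le (Real.cos k)]

lemma xi_pos (k : ℝ) : 0 < xiFun k := Real.rpow_pos_of_pos (base_pos k) _

lemma xi_cube (k : ℝ) :
    xiFun k ^ 3 = 2 * Real.cos k + Real.sqrt (4 * Real.cos k ^ 2 + 1) := by
  rw [xiFun, ← Real.rpow_natCast _ 3, ← Real.rpow_mul (base_pos k).le]
  norm_num

lemma xi_cube_inv (k : ℝ) :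
    (xiFun k)⁻¹ ^ 3 = Real.sqrt (4 * Real.cos k ^ 2 + 1) - 2 * Real.cos k := by
  have hs : Real.sqrt (4 * Real.cos k ^ 2 + 1) ^ 2 = 4 * Real.cos k ^ 2 + 1 :=
    Real.sq_sqrt (by positivity)
  have key : (Real.sqrt (4 * Real.cos k ^ 2 + 1) - 2 * Real.cos k) * xiFun k ^ 3 = 1 := by
    rw [xi_cube]; nlinarith [hs]
  rw [inv_pow]
  exact (eq_inv_of_mul_eq_one_left key).symm

/-- the cubic relation for `x = ξ - 1/ξ`. -/
lemma cubic_rel (k : ℝ) :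
    (xiFun k - 1 / xiFun k) ^ 3 + 3 * (xiFun k - 1 / xiFun k) = 4 * Real.cos k := by
  have hne : xiFun k ≠ 0 := (xi_pos k).ne'
  have expand : (xiFun k - 1 / xiFun k) ^ 3 + 3 * (xiFun k - 1 / xiFun k)
      = xiFun k ^ 3 - (xiFun k)⁻¹ ^ 3 := by
    field_simp; ring
  rw [expand, xi_cube, xi_cube_inv]; ring

lemma xi_continuous : Continuous xiFun := by
  apply Continuous.rpow_const
  · exact (continuous_const.mul Real.continuous_cos).add
      ((continuous_const.mul (Real.continuous_cos.pow 2)).add continuous_const).sqrt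
  · intro x; exact Or.inl (base_pos x).ne'

lemma lam1_continuous : Continuous lam1 := by
  unfold lam1
  apply ((continuous_const.mul Real.continuous_cos).div_const 3).add
  apply Continuous.div_const
  exact (xi_continuous.sub (continuous_const.div xi_continuous fun x => (xi_pos x).ne'))

/-- `x = ξ - 1/ξ` bounds from the cubic relation. -/
lemma xvar_le_one {k : ℝ} : xiFun k - 1 / xiFun k ≤ 1 := by
  have h := cubic_rel k
  have hc : Real.cos k ≤ 1 := Real.cos_le_one k
  nlinarith [sq_nonneg (xiFun k - 1 / xiFun k + 1), sq_nonneg (xiFun k - 1 / xiFun k - 1)]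

lemma xvar_ge_neg_one {k : ℝ} : -1 ≤ xiFun k - 1 / xiFun k := by
  have h := cubic_rel k
  have hc : -1 ≤ Real.cos k := Real.neg_one_le_cos k
  nlinarith [sq_nonneg (xiFun k - 1 / xiFun k + 1), sq_nonneg (xiFun k - 1 / xiFun k - 1)]

lemma lam1_le_one (k : ℝ) : lam1 k ≤ 1 := by
  have := xvar_le_one (k := k)
  have := Real.cos_le_one k
  unfold lam1; linarith

lemma lam1_lt_one {k : ℝ} (h : Real.cos k < 1) : lam1 k < 1 := by
  have h1 := cubic_rel k
  have hx : xiFun k - 1 / xiFun k < 1 := by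
    nlinarith [sq_nonneg (xiFun k - 1 / xiFun k + 1), sq_nonneg (xiFun k - 1 / xiFun k - 1)]
  unfold lam1; linarith

lemma lam1_nonneg {k : ℝ} (h : 0 ≤ Real.cos k) : 0 ≤ lam1 k := by
  have h1 := cubic_rel k
  have hx : 0 ≤ xiFun k - 1 / xiFun k := by nlinarith [sq_nonneg (xiFun k - 1 / xiFun k)]
  unfold lam1; linarith

lemma lam1_zero : lam1 0 = 1 := by
  have h1 := cubic_rel 0
  rw [Real.cos_zero] at h1
  have hx : xiFun 0 - 1 / xiFun 0 = 1 := by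
    nlinarith [sq_nonneg (xiFun 0 - 1 / xiFun 0 + 1), sq_nonneg (xiFun 0 - 1 / xiFun 0 - 1)]
  unfold lam1; rw [Real.cos_zero, hx]; norm_num

lemma xi_add_pi (k : ℝ) : xiFun (k + Real.pi) = (xiFun k)⁻¹ := by
  have hb := base_pos k
  have hs : Real.sqrt (4 * Real.cos k ^ 2 + 1) ^ 2 = 4 * Real.cos k ^ 2 + 1 :=
    Real.sq_sqrt (by positivity)
  have hbase : 2 * Real.cos (k + Real.pi) + Real.sqrt (4 * Real.cos (k + Real.pi) ^ 2 + 1)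
      = (2 * Real.cos k + Real.sqrt (4 * Real.cos k ^ 2 + 1))⁻¹ := by
    rw [Real.cos_add_pi,
      show 4 * (-Real.cos k) ^ 2 + 1 = 4 * Real.cos k ^ 2 + 1 by ring]
    refine eq_inv_of_mul_eq_one_left ?_
    nlinarith [hs]
  rw [xiFun, hbase, Real.inv_rpow hb.le, ← xiFun]

lemma lam1_add_pi (k : ℝ) : lam1 (k + Real.pi) = - lam1 k := by
  have hx := xi_pos k
  unfold lam1
  rw [xi_add_pi, Real.cos_add_pi, one_div, inv_inv]
  field_simp
  ring

lemma xi_periodic : Function.Periodic xiFun (2 * Real.pi) := by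
  intro k; unfold xiFun; rw [Real.cos_add_two_pi]

lemma lam1_periodic : Function.Periodic lam1 (2 * Real.pi) := by
  intro k; unfold lam1; rw [xi_periodic k, Real.cos_add_two_pi]

lemma lam1_pow_intervalIntegrable (n : ℕ) (a b : ℝ) :
    IntervalIntegrable (fun k => lam1 k ^ n) MeasureTheory.volume a b :=
  (lam1_continuous.pow n).intervalIntegrable a b

lemma lam1_nonneg_on {k : ℝ} (h : k ∈ Set.Icc (-(Real.pi/2)) (Real.pi/2)) : 0 ≤ lam1 k :=
  lam1_nonneg (Real.cos_nonneg_of_mem_Icc (by simpa using h))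

lemma alpha_lower {r : ℝ} (hr0 : 0 < r) (hr1 : r < 1) :
    ∃ c > 0, ∀ n : ℕ, c * r ^ n ≤ alphaScale n := by
  -- find δ with lam1 ≥ r on [-δ, δ]
  have hcont : ContinuousAt lam1 0 := lam1_continuous.continuousAt
  have hev : ∀ᶠ k in nhds (0:ℝ), r < lam1 k := by
    apply hcont.eventually_const_lt
    rw [lam1_zero]; exact hr1
  obtain ⟨δ₀, hδ₀, hδball⟩ := Metric.eventually_nhds_iff.mp hev
  set δ : ℝ := min (δ₀ / 2) (Real.pi / 2) with hδdef
  have hδpos : 0 < δ := lt_min (by linarith) (by positivity)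
  have hδle : δ ≤ Real.pi / 2 := min_le_right _ _
  have hmem : ∀ k ∈ Set.Icc (-δ) δ, r ≤ lam1 k := by
    intro k hk
    refine (hδball ?_).le
    rw [Real.dist_eq, sub_zero]
    have := abs_le.mpr ⟨hk.1, hk.2⟩
    calc |k| ≤ δ := this
      _ ≤ δ₀ / 2 := min_le_left _ _
      _ < δ₀ := by linarith
  refine ⟨2 * δ, by linarith, fun n => ?_⟩
  have h1 : ∫ k in (-δ)..δ, r ^ n ≤ ∫ k in (-δ)..δ, lam1 k ^ n := by
    apply intervalIntegral.integral_mono_on (by linarith)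
      (intervalIntegrable_const) (lam1_pow_intervalIntegrable n _ _)
    intro k hk
    exact pow_le_pow_left₀ hr0.le (hmem k hk) n
  have h2 : ∫ k in (-δ)..δ, lam1 k ^ n ≤ alphaScale n := by
    apply intervalIntegral.integral_mono_interval (by linarith) (by linarith) hδle
    · filter_upwards [MeasureTheory.ae_restrict_mem measurableSet_Ioc] with k hk
      exact pow_nonneg (lam1_nonneg_on (Set.mem_Icc.mpr ⟨hk.1.le, hk.2⟩)) n
    · exact lam1_pow_intervalIntegrable n _ _
  have h3 : ∫ k in (-δ)..δ, (r:ℝ) ^ n = 2 * δ * r ^ n := by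
    rw [intervalIntegral.integral_const, smul_eq_mul]; ring
  linarith [h1, h2, h3 ▸ h1]

lemma alpha_pos (n : ℕ) : 0 < alphaScale n := by
  obtain ⟨c, hc, h⟩ := alpha_lower (r := 1/2) (by norm_num) (by norm_num)
  calc (0:ℝ) < c * (1/2) ^ n := by positivity
    _ ≤ alphaScale n := h n

set_option maxHeartbeats 1000000 in
lemma concentration (G : ℝ → ℝ) (hG : Continuous G) :
    Tendsto (fun n : ℕ => (alphaScale n)⁻¹ *
      ∫ k in (-(Real.pi/2))..(Real.pi/2), G k * lam1 k ^ n) atTop (nhds (G 0)) := by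
  have hπ := Real.pi_pos
  rw [Metric.tendsto_atTop]
  intro ε hε
  -- Step 1: δ
  have hct : ContinuousAt G 0 := hG.continuousAt
  obtain ⟨δ₀, hδ₀, hδball⟩ := Metric.continuousAt_iff.mp hct (ε/2) (by linarith)
  set δ : ℝ := min (δ₀ / 2) (Real.pi / 4) with hδdef
  have hδpos : 0 < δ := lt_min (by linarith) (by linarith)
  have hδlt : δ < Real.pi / 2 := lt_of_le_of_lt (min_le_right _ _) (by linarith)
  have hδsmall : ∀ k : ℝ, |k| ≤ δ → |G k - G 0| ≤ ε / 2 := by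
    intro k hk
    have : dist k 0 < δ₀ := by
      rw [Real.dist_eq, sub_zero]
      exact lt_of_le_of_lt (hk.trans (min_le_left _ _)) (by linarith)
    have h2 := hδball this
    rw [Real.dist_eq] at h2
    exact h2.le
  -- Step 2: compact annulus and its max
  set K : Set ℝ := Set.Icc (-(Real.pi/2)) (Real.pi/2) \ Set.Ioo (-δ) δ with hKdef
  have hKcomp : IsCompact K := isCompact_Icc.diff isOpen_Ioo
  have hKne : K.Nonempty := by
    refine ⟨Real.pi/2, Set.mem_Icc.mpr ⟨by linarith, le_refl _⟩, fun h => ?_⟩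
    exact absurd h.2 (not_lt.mpr hδlt.le)
  obtain ⟨k₀, hk₀K, hmax⟩ := hKcomp.exists_isMaxOn hKne lam1_continuous.continuousOn
  set q : ℝ := lam1 k₀ with hqdef
  have hk₀ne : k₀ ≠ 0 := by
    intro h; exact hk₀K.2 (by rw [h]; exact Set.mem_Ioo.mpr ⟨by linarith, hδpos⟩)
  have hq1 : q < 1 := by
    apply lam1_lt_one
    have h1 : Real.cos |k₀| < Real.cos 0 := by
      apply Real.cos_lt_cos_of_nonneg_of_le_pi le_rfl
      · exact le_trans (abs_le.mpr ⟨hk₀K.1.1, hk₀K.1.2⟩) (by linarith)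
      · exact abs_pos.mpr hk₀ne
    rwa [Real.cos_abs, Real.cos_zero] at h1
  have hq0 : 0 ≤ q := lam1_nonneg_on hk₀K.1
  set r : ℝ := (q + 1) / 2 with hrdef
  have hqr : q < r := by rw [hrdef]; linarith
  have hr0 : 0 < r := by rw [hrdef]; linarith
  have hr1 : r < 1 := by rw [hrdef]; linarith
  obtain ⟨c, hc, hαlow⟩ := alpha_lower hr0 hr1
  -- Step 3: bound M
  obtain ⟨M₀, hM₀⟩ := isCompact_Icc.exists_bound_of_continuousOn
    (s := Set.Icc (-(Real.pi/2)) (Real.pi/2))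
    ((hG.sub continuous_const).continuousOn)
  set M : ℝ := max M₀ 0 with hMdef
  have hM0 : 0 ≤ M := le_max_right _ _
  have hM : ∀ k ∈ Set.Icc (-(Real.pi/2)) (Real.pi/2), |G k - G 0| ≤ M := by
    intro k hk
    exact le_trans (by simpa using hM₀ k hk) (le_max_left _ _)
  -- Step 4: tail tendsto
  have hqrlt : q / r < 1 := (div_lt_one hr0).mpr hqr
  have hqr0 : 0 ≤ q / r := by positivity
  have hT : Tendsto (fun n : ℕ => (M * Real.pi / c) * (q/r) ^ n) atTop (nhds 0) := by
    have := tendsto_pow_atTop_nhds_zero_of_lt_one hqr0 hqrlt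
    simpa using this.const_mul (M * Real.pi / c)
  have hev : ∀ᶠ n : ℕ in atTop, (M * Real.pi / c) * (q/r) ^ n < ε / 2 :=
    hT.eventually (gt_mem_nhds (by linarith))
  obtain ⟨N, hN⟩ := eventually_atTop.mp hev
  clear_value δ q r M
  refine ⟨N, fun n hn => ?_⟩
  -- Step 5: main estimate for fixed n
  have hα := alpha_pos n
  have hαc := hαlow n
  have hcr : (0:ℝ) < c * r ^ n := by positivity
  -- integrability
  have hint : ∀ a b : ℝ, IntervalIntegrable (fun k => (G k - G 0) * lam1 k ^ n)
      MeasureTheory.volume a b :=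
    fun a b => ((hG.sub continuous_const).mul (lam1_continuous.pow n)).intervalIntegrable a b
  set I : ℝ := ∫ k in (-δ)..δ, (G k - G 0) * lam1 k ^ n with hI1def
  set I₂ : ℝ := ∫ k in (-(Real.pi/2))..(-δ), (G k - G 0) * lam1 k ^ n with hI2def
  set I₃ : ℝ := ∫ k in δ..(Real.pi/2), (G k - G 0) * lam1 k ^ n with hI3def
  have hsplit : (∫ k in (-(Real.pi/2))..(Real.pi/2), (G k - G 0) * lam1 k ^ n)
      = I₂ + I + I₃ := by
    rw [← intervalIntegral.integral_add_adjacent_intervals (a := -(Real.pi/2)) (b := δ)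
        (c := Real.pi/2) (hint _ _) (hint _ _),
      ← intervalIntegral.integral_add_adjacent_intervals (a := -(Real.pi/2)) (b := -δ)
        (c := δ) (hint _ _) (hint _ _)]
  -- bound I
  have hIbound : |I| ≤ ε/2 * alphaScale n := by
    have h1 : |I| ≤ ∫ k in (-δ)..δ, |(G k - G 0) * lam1 k ^ n| :=
      intervalIntegral.abs_integral_le_integral_abs (by linarith)
    have h2 : (∫ k in (-δ)..δ, |(G k - G 0) * lam1 k ^ n|)
        ≤ ∫ k in (-δ)..δ, ε/2 * lam1 k ^ n := by
      apply intervalIntegral.integral_mono_on (by linarith)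
        ((hint _ _).abs) (((continuous_const.mul (lam1_continuous.pow n))).intervalIntegrable _ _)
      intro k hk
      have hkin : k ∈ Set.Icc (-(Real.pi/2)) (Real.pi/2) :=
        Set.mem_Icc.mpr ⟨by linarith [hk.1], by linarith [hk.2]⟩
      have hlam1p : 0 ≤ lam1 k ^ n := pow_nonneg (lam1_nonneg_on hkin) n
      rw [abs_mul, abs_of_nonneg hlam1p]
      have : |G k - G 0| ≤ ε/2 := hδsmall k (abs_le.mpr ⟨hk.1, hk.2⟩)
      exact mul_le_mul_of_nonneg_right this hlam1p
    have h3 : (∫ k in (-δ)..δ, ε/2 * lam1 k ^ n) = ε/2 * ∫ k in (-δ)..δ, lam1 k ^ n := by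
      rw [intervalIntegral.integral_const_mul]
    have h4 : (∫ k in (-δ)..δ, lam1 k ^ n) ≤ alphaScale n := by
      apply intervalIntegral.integral_mono_interval (by linarith) (by linarith) hδlt.le
      · filter_upwards [MeasureTheory.ae_restrict_mem measurableSet_Ioc] with k hk
        exact pow_nonneg (lam1_nonneg_on (Set.mem_Icc.mpr ⟨hk.1.le, hk.2⟩)) n
      · exact lam1_pow_intervalIntegrable n _ _
    calc |I| ≤ ∫ k in (-δ)..δ, |(G k - G 0) * lam1 k ^ n| := h1
      _ ≤ ∫ k in (-δ)..δ, ε/2 * lam1 k ^ n := h2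
      _ = ε/2 * ∫ k in (-δ)..δ, lam1 k ^ n := h3
      _ ≤ ε/2 * alphaScale n := by
          apply mul_le_mul_of_nonneg_left h4 (by linarith)
  -- bound on K for tails
  have htail : ∀ k ∈ K, |(G k - G 0) * lam1 k ^ n| ≤ M * q ^ n := by
    intro k hk
    rw [abs_mul]
    have hlam1pnn : 0 ≤ lam1 k := lam1_nonneg_on hk.1
    have hlam1pq : lam1 k ≤ q := by rw [hqdef]; exact hmax hk
    have : |lam1 k ^ n| = lam1 k ^ n := abs_of_nonneg (pow_nonneg hlam1pnn n)
    rw [this]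
    exact mul_le_mul (hM k hk.1) (pow_le_pow_left₀ hlam1pnn hlam1pq n) (pow_nonneg hlam1pnn n) hM0
  have hI₃ : |I₃| ≤ M * q ^ n * (Real.pi/2) := by
    have hb : ∀ x ∈ Set.uIoc δ (Real.pi/2), ‖(G x - G 0) * lam1 x ^ n‖ ≤ M * q ^ n := by
      intro x hx
      rw [Set.uIoc_of_le hδlt.le] at hx
      refine htail x ⟨Set.mem_Icc.mpr ⟨by linarith [hx.1], hx.2⟩, fun hmem => ?_⟩
      have := hmem.2; linarith [hx.1]
    have := intervalIntegral.norm_integral_le_of_norm_le_const hb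
    rw [Real.norm_eq_abs] at this
    calc |I₃| ≤ M * q^n * |Real.pi/2 - δ| := this
      _ ≤ M * q^n * (Real.pi/2) := by
          apply mul_le_mul_of_nonneg_left _ (by positivity)
          rw [abs_of_nonneg (by linarith)]; linarith
  have hI₂ : |I₂| ≤ M * q ^ n * (Real.pi/2) := by
    have hb : ∀ x ∈ Set.uIoc (-(Real.pi/2)) (-δ), ‖(G x - G 0) * lam1 x ^ n‖ ≤ M * q ^ n := by
      intro x hx
      rw [Set.uIoc_of_le (by linarith)] at hx
      refine htail x ⟨Set.mem_Icc.mpr ⟨hx.1.le, by linarith [hx.2]⟩, fun hmem => ?_⟩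
      have := hmem.1; linarith [hx.2]
    have := intervalIntegral.norm_integral_le_of_norm_le_const hb
    rw [Real.norm_eq_abs] at this
    calc |I₂| ≤ M * q^n * |(-δ) - (-(Real.pi/2))| := this
      _ ≤ M * q^n * (Real.pi/2) := by
          apply mul_le_mul_of_nonneg_left _ (by positivity)
          rw [abs_of_nonneg (by linarith)]; linarith
  -- combine
  have hGsplit : (∫ k in (-(Real.pi/2))..(Real.pi/2), G k * lam1 k ^ n)
      = (∫ k in (-(Real.pi/2))..(Real.pi/2), (G k - G 0) * lam1 k ^ n)
        + G 0 * alphaScale n := by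
    unfold alphaScale
    rw [← intervalIntegral.integral_const_mul]
    rw [← intervalIntegral.integral_add (g := fun k => G 0 * lam1 k ^ n) (hint _ _)
      ((continuous_const.mul (lam1_continuous.pow n)).intervalIntegrable _ _)]
    apply intervalIntegral.integral_congr
    intro k _
    simp only []
    ring
  rw [Real.dist_eq]
  have hdist : (alphaScale n)⁻¹ * (∫ k in (-(Real.pi/2))..(Real.pi/2), G k * lam1 k ^ n) - G 0
      = (alphaScale n)⁻¹ * (I₂ + I + I₃) := by
    rw [hGsplit, hsplit]
    field_simp
    ring
  rw [hdist, abs_mul, abs_of_pos (inv_pos.mpr hα)]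
  have habs : |I₂ + I + I₃| ≤ ε/2 * alphaScale n + 2 * (M * q^n * (Real.pi/2)) := by
    calc |I₂ + I + I₃| ≤ |I₂| + |I| + |I₃| := by
          calc |I₂ + I + I₃| ≤ |I₂ + I| + |I₃| := abs_add_le _ _
            _ ≤ |I₂| + |I| + |I₃| := by linarith [abs_add_le I₂ I]
      _ ≤ ε/2 * alphaScale n + 2 * (M * q^n * (Real.pi/2)) := by linarith
  calc (alphaScale n)⁻¹ * |I₂ + I + I₃|
      ≤ (alphaScale n)⁻¹ * (ε/2 * alphaScale n + M * q^n * Real.pi) := by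
        apply mul_le_mul_of_nonneg_left _ (by positivity)
        linarith [habs]
    _ = ε/2 + M * q^n * Real.pi * (alphaScale n)⁻¹ := by
        rw [mul_add]
        rw [show (alphaScale n)⁻¹ * (ε/2 * alphaScale n) = ε/2 by field_simp]
        ring
    _ ≤ ε/2 + M * q^n * Real.pi * (c * r^n)⁻¹ := by
        have : (alphaScale n)⁻¹ ≤ (c * r^n)⁻¹ := by
          apply inv_anti₀ hcr hαc
        have hnn : 0 ≤ M * q^n * Real.pi := by positivity
        nlinarith [this, hnn]
    _ = ε/2 + (M * Real.pi / c) * (q/r)^n := by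
        rw [div_pow, mul_inv]
        have hrn : (r:ℝ)^n ≠ 0 := by positivity
        field_simp
    _ < ε/2 + ε/2 := by linarith [hN n hn]
    _ = ε := by ring

lemma fold_integral (g : ℝ → ℝ) (hg : Continuous g)
    (hp : Function.Periodic g (2 * Real.pi)) (n : ℕ) :
    (∫ k in (-Real.pi)..Real.pi, g k * lam1 k ^ n)
      = ∫ k in (-(Real.pi/2))..(Real.pi/2),
          (g k + (-1:ℝ)^n * g (k + Real.pi)) * lam1 k ^ n := by
  have hπ := Real.pi_pos
  have hFc : Continuous (fun k => g k * lam1 k ^ n) := hg.mul (lam1_continuous.pow n)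
  have hF : Function.Periodic (fun k => g k * lam1 k ^ n) (2 * Real.pi) := by
    intro k
    simp only [hp k, lam1_periodic k]
  -- shift the window
  have h1 : (∫ k in (-Real.pi)..Real.pi, g k * lam1 k ^ n)
      = ∫ k in (-(Real.pi/2))..(3 * Real.pi / 2), g k * lam1 k ^ n := by
    have := hF.intervalIntegral_add_eq (-Real.pi) (-(Real.pi/2))
    rw [show -Real.pi + 2 * Real.pi = Real.pi by ring,
      show -(Real.pi/2) + 2 * Real.pi = 3 * Real.pi / 2 by ring] at this
    exact this
  have h2 : (∫ k in (-(Real.pi/2))..(3 * Real.pi / 2), g k * lam1 k ^ n)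
      = (∫ k in (-(Real.pi/2))..(Real.pi/2), g k * lam1 k ^ n)
        + ∫ k in (Real.pi/2)..(3 * Real.pi / 2), g k * lam1 k ^ n := by
    rw [intervalIntegral.integral_add_adjacent_intervals
      (hFc.intervalIntegrable _ _) (hFc.intervalIntegrable _ _)]
  have h3 : (∫ k in (Real.pi/2)..(3 * Real.pi / 2), g k * lam1 k ^ n)
      = ∫ k in (-(Real.pi/2))..(Real.pi/2), g (k + Real.pi) * lam1 (k + Real.pi) ^ n := by
    rw [intervalIntegral.integral_comp_add_right (a := -(Real.pi/2)) (b := Real.pi/2)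
      (fun k => g k * lam1 k ^ n) Real.pi]
    norm_num
    ring_nf
  have h4 : (∫ k in (-(Real.pi/2))..(Real.pi/2), g (k + Real.pi) * lam1 (k + Real.pi) ^ n)
      = ∫ k in (-(Real.pi/2))..(Real.pi/2), ((-1:ℝ)^n * g (k + Real.pi)) * lam1 k ^ n := by
    apply intervalIntegral.integral_congr
    intro k _
    simp only [lam1_add_pi]
    rw [neg_pow]
    ring
  have h6 : IntervalIntegrable (fun k => (-1:ℝ)^n * g (k + Real.pi) * lam1 k ^ n)
      MeasureTheory.volume (-(Real.pi/2)) (Real.pi/2) := by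
    apply Continuous.intervalIntegrable
    have : Continuous fun k : ℝ => g (k + Real.pi) := hg.comp (by fun_prop)
    exact (continuous_const.mul this).mul (lam1_continuous.pow n)
  rw [h1, h2, h3, h4, ← intervalIntegral.integral_add (hFc.intervalIntegrable _ _) h6]
  apply intervalIntegral.integral_congr
  intro k _
  ring

lemma part_even (g : ℝ → ℝ) (hg : Continuous g) (hp : Function.Periodic g (2 * Real.pi)) :
    Tendsto (fun n : ℕ => (alphaScale (2 * n))⁻¹ *
      ∫ k in (-Real.pi)..Real.pi, g k * lam1 k ^ (2 * n))
      atTop (nhds (g 0 + g Real.pi)) := by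
  have hG : Continuous (fun k => g k + g (k + Real.pi)) :=
    hg.add (hg.comp (by fun_prop))
  have hcomp : Tendsto (fun n : ℕ => 2 * n) atTop atTop :=
    tendsto_atTop_atTop.mpr fun b => ⟨b, fun a ha => by omega⟩
  have h0 : (fun k => g k + g (k + Real.pi)) 0 = g 0 + g Real.pi := by
    simp
  have base := (concentration _ hG).comp hcomp
  rw [zero_add] at base
  apply base.congr
  intro n
  simp only [Function.comp]
  congr 1
  rw [fold_integral g hg hp (2 * n)]
  apply intervalIntegral.integral_congr
  intro k _
  rw [Even.neg_one_pow ⟨n, by ring⟩]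
  ring

lemma part_odd (g : ℝ → ℝ) (hg : Continuous g) (hp : Function.Periodic g (2 * Real.pi)) :
    Tendsto (fun n : ℕ => (alphaScale (2 * n - 1))⁻¹ *
      ∫ k in (-Real.pi)..Real.pi, g k * lam1 k ^ (2 * n - 1))
      atTop (nhds (g 0 - g Real.pi)) := by
  have hG : Continuous (fun k => g k - g (k + Real.pi)) :=
    hg.sub (hg.comp (by fun_prop))
  have hcomp : Tendsto (fun n : ℕ => 2 * n - 1) atTop atTop :=
    tendsto_atTop_atTop.mpr fun b => ⟨b + 1, fun a ha => by omega⟩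
  have h0 : (fun k => g k - g (k + Real.pi)) 0 = g 0 - g Real.pi := by
    simp
  have base := (concentration _ hG).comp hcomp
  rw [zero_add] at base
  apply base.congr'
  filter_upwards [eventually_ge_atTop 1] with n hn
  simp only [Function.comp]
  congr 1
  rw [fold_integral g hg hp (2 * n - 1)]
  apply intervalIntegral.integral_congr
  intro k _
  have hodd : Odd (2 * n - 1) := ⟨n - 1, by omega⟩
  rw [Odd.neg_one_pow hodd]
  ring

lemma lam2_eq (k : ℝ) : lam2 k =
    Complex.mk (2 * Real.cos k / 3 + (1 / xiFun k - xiFun k) / 6)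
      (Real.sqrt 3 * (xiFun k + 1 / xiFun k) / 6) := by
  have hs : xiFun k ≠ 0 := (xi_pos k).ne'
  rw [lam2]
  apply Complex.ext <;>
    simp [Complex.add_re, Complex.add_im, Complex.mul_re, Complex.mul_im,
      Complex.div_re, Complex.div_im, Complex.normSq_apply, Complex.ofReal_re,
      Complex.ofReal_im, Complex.cos_ofReal_re] <;>
    field_simp <;> ring

lemma lam2_normSq_le (k : ℝ) : Complex.normSq (lam2 k) ≤ 2/3 := by
  have hs := xi_pos k
  have hsne : xiFun k ≠ 0 := hs.ne'
  set x : ℝ := xiFun k - 1 / xiFun k with hx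
  have hcube := cubic_rel k
  have hxle : x ≤ 1 := xvar_le_one
  have hxge : -1 ≤ x := xvar_ge_neg_one
  have hx2 : x ^ 2 ≤ 1 := by nlinarith
  have h3 : Real.sqrt 3 ^ 2 = 3 := Real.sq_sqrt (by norm_num)
  have hid : (xiFun k + 1 / xiFun k) ^ 2 = x ^ 2 + 4 := by
    rw [hx]; field_simp; ring
  have hc : Real.cos k = (x ^ 3 + 3 * x) / 4 := by linarith
  rw [lam2_eq, Complex.normSq_mk]
  have hre : 2 * Real.cos k / 3 + (1 / xiFun k - xiFun k) / 6
      = (x ^ 3 + 2 * x) / 6 := by rw [hc, hx]; ring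
  rw [hre]
  have him : Real.sqrt 3 * (xiFun k + 1 / xiFun k) / 6
      * (Real.sqrt 3 * (xiFun k + 1 / xiFun k) / 6) = (x ^ 2 + 4) / 12 := by
    have : Real.sqrt 3 * (xiFun k + 1 / xiFun k) / 6
        * (Real.sqrt 3 * (xiFun k + 1 / xiFun k) / 6)
        = Real.sqrt 3 ^ 2 * (xiFun k + 1 / xiFun k) ^ 2 / 36 := by ring
    rw [this, h3, hid]; ring
  rw [him]
  have main : ∀ y : ℝ, y^2 ≤ 1 →
      (y ^ 3 + 2 * y) / 6 * ((y ^ 3 + 2 * y) / 6) + (y ^ 2 + 4) / 12 ≤ 2 / 3 := by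
    intro y hy
    nlinarith [sq_nonneg y, sq_nonneg (y^2), sq_nonneg (y^3), sq_nonneg (y^2 - 1),
      mul_nonneg (sq_nonneg (y^2)) (sub_nonneg.mpr hy)]
  exact main x hx2

lemma lam2_abs_le (k : ℝ) : ‖lam2 k‖ ≤ Real.sqrt (2/3) := by
  rw [Complex.norm_def]
  exact Real.sqrt_le_sqrt (lam2_normSq_le k)

lemma lam3_abs_le (k : ℝ) : ‖lam3 k‖ ≤ Real.sqrt (2/3) := by
  rw [lam3, Complex.norm_conj]; exact lam2_abs_le k

lemma lam0_abs_le (k : ℝ) : |lam0 k| ≤ Real.sqrt (2/3) := by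
  have h1 : |lam0 k| ≤ 2/3 := by
    rw [lam0, abs_div]
    rw [abs_mul]
    simp only [abs_of_pos (by norm_num : (0:ℝ) < 2), abs_of_pos (by norm_num : (0:ℝ) < 3)]
    have := Real.abs_cos_le_one k
    nlinarith [abs_nonneg (Real.cos k)]
  refine h1.trans ?_
  rw [Real.le_sqrt' (by norm_num)]
  norm_num

lemma part_zero (g₀ g₂ g₃ : ℝ → ℝ)
    (hg₀ : Continuous g₀) (hg₂ : Continuous g₂) (hg₃ : Continuous g₃) :
    Tendsto (fun n : ℕ => ((alphaScale n : ℂ))⁻¹ *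
        ∫ k in (-Real.pi)..Real.pi,
          ((g₀ k : ℂ) * ((lam0 k : ℂ)) ^ n + (g₂ k : ℂ) * lam2 k ^ n +
            (g₃ k : ℂ) * lam3 k ^ n))
      atTop (nhds 0) := by
  have hπ := Real.pi_pos
  set q : ℝ := Real.sqrt (2/3) with hqdef
  have hq0 : 0 ≤ q := Real.sqrt_nonneg _
  have hqlt : q < 9/10 := by
    rw [hqdef, Real.sqrt_lt' (by norm_num)]; norm_num
  obtain ⟨c, hc, hαlow⟩ := alpha_lower (r := 9/10) (by norm_num) (by norm_num)
  -- bounds on the g's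
  obtain ⟨B₀, hB₀⟩ := isCompact_Icc.exists_bound_of_continuousOn
    (s := Set.Icc (-Real.pi) Real.pi) hg₀.continuousOn
  obtain ⟨B₂, hB₂⟩ := isCompact_Icc.exists_bound_of_continuousOn
    (s := Set.Icc (-Real.pi) Real.pi) hg₂.continuousOn
  obtain ⟨B₃, hB₃⟩ := isCompact_Icc.exists_bound_of_continuousOn
    (s := Set.Icc (-Real.pi) Real.pi) hg₃.continuousOn
  set B : ℝ := max (max B₀ B₂) (max B₃ 0) with hBdef
  have hB0 : 0 ≤ B := le_trans (le_max_right _ _) (le_max_right _ _)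
  have hB : ∀ k ∈ Set.Icc (-Real.pi) Real.pi,
      |g₀ k| ≤ B ∧ |g₂ k| ≤ B ∧ |g₃ k| ≤ B := by
    intro k hk
    refine ⟨le_trans (by simpa using hB₀ k hk) ?_, le_trans (by simpa using hB₂ k hk) ?_,
      le_trans (by simpa using hB₃ k hk) ?_⟩
    · exact le_trans (le_max_left _ _) (le_max_left _ _)
    · exact le_trans (le_max_right _ _) (le_max_left _ _)
    · exact le_trans (le_max_left _ _) (le_max_right _ _)
  apply squeeze_zero_norm (a := fun n : ℕ => (3 * B * (2 * Real.pi) / c) * (q / (9/10)) ^ n)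
  · intro n
    have hα := alpha_pos n
    have hαc := hαlow n
    have hcr : (0:ℝ) < c * (9/10) ^ n := by positivity
    -- pointwise bound on the integrand
    have hpt : ∀ x ∈ Set.uIoc (-Real.pi) Real.pi,
        ‖(g₀ x : ℂ) * ((lam0 x : ℂ)) ^ n + (g₂ x : ℂ) * lam2 x ^ n +
          (g₃ x : ℂ) * lam3 x ^ n‖ ≤ 3 * B * q ^ n := by
      intro x hx
      rw [Set.uIoc_of_le (by linarith)] at hx
      have hxicc : x ∈ Set.Icc (-Real.pi) Real.pi := ⟨hx.1.le, hx.2⟩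
      obtain ⟨hb0, hb2, hb3⟩ := hB x hxicc
      have t0 : ‖(g₀ x : ℂ) * ((lam0 x : ℂ)) ^ n‖ ≤ B * q ^ n := by
        rw [norm_mul, norm_pow, Complex.norm_real, Complex.norm_real, Real.norm_eq_abs,
          Real.norm_eq_abs]
        exact mul_le_mul hb0 (pow_le_pow_left₀ (abs_nonneg _) (lam0_abs_le x) n)
          (pow_nonneg (abs_nonneg _) n) hB0
      have t2 : ‖(g₂ x : ℂ) * lam2 x ^ n‖ ≤ B * q ^ n := by
        rw [norm_mul, norm_pow, Complex.norm_real, Real.norm_eq_abs]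
        exact mul_le_mul hb2 (pow_le_pow_left₀ (norm_nonneg _) (lam2_abs_le x) n)
          (pow_nonneg (norm_nonneg _) n) hB0
      have t3 : ‖(g₃ x : ℂ) * lam3 x ^ n‖ ≤ B * q ^ n := by
        rw [norm_mul, norm_pow, Complex.norm_real, Real.norm_eq_abs]
        exact mul_le_mul hb3 (pow_le_pow_left₀ (norm_nonneg _) (lam3_abs_le x) n)
          (pow_nonneg (norm_nonneg _) n) hB0
      calc ‖(g₀ x : ℂ) * ((lam0 x : ℂ)) ^ n + (g₂ x : ℂ) * lam2 x ^ n +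
            (g₃ x : ℂ) * lam3 x ^ n‖
          ≤ ‖(g₀ x : ℂ) * ((lam0 x : ℂ)) ^ n + (g₂ x : ℂ) * lam2 x ^ n‖ +
            ‖(g₃ x : ℂ) * lam3 x ^ n‖ := norm_add_le _ _
        _ ≤ ‖(g₀ x : ℂ) * ((lam0 x : ℂ)) ^ n‖ + ‖(g₂ x : ℂ) * lam2 x ^ n‖ +
            ‖(g₃ x : ℂ) * lam3 x ^ n‖ := by linarith [norm_add_le ((g₀ x : ℂ) * ((lam0 x : ℂ)) ^ n) ((g₂ x : ℂ) * lam2 x ^ n)]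
        _ ≤ 3 * B * q ^ n := by linarith
    have hint := intervalIntegral.norm_integral_le_of_norm_le_const hpt
    rw [norm_mul, norm_inv, Complex.norm_real, Real.norm_eq_abs, abs_of_pos hα]
    calc (alphaScale n)⁻¹ * ‖∫ k in (-Real.pi)..Real.pi,
          ((g₀ k : ℂ) * ((lam0 k : ℂ)) ^ n + (g₂ k : ℂ) * lam2 k ^ n +
            (g₃ k : ℂ) * lam3 k ^ n)‖
        ≤ (alphaScale n)⁻¹ * (3 * B * q ^ n * (2 * Real.pi)) := by
          apply mul_le_mul_of_nonneg_left _ (by positivity)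
          refine hint.trans ?_
          rw [show |Real.pi - -Real.pi| = 2 * Real.pi by rw [abs_of_pos (by linarith)]; ring]
      _ ≤ (c * (9/10) ^ n)⁻¹ * (3 * B * q ^ n * (2 * Real.pi)) := by
          apply mul_le_mul_of_nonneg_right (inv_anti₀ hcr hαc) (by positivity)
      _ = (3 * B * (2 * Real.pi) / c) * (q / (9/10)) ^ n := by
          rw [div_pow, mul_inv]
          have : ((9:ℝ)/10) ^ n ≠ 0 := by positivity
          field_simp
          ring_nf
          rw [mul_assoc (B * q ^ n), ← mul_pow]; norm_num
  · have h1 : Tendsto (fun n : ℕ => (q / (9/10)) ^ n) atTop (nhds 0) :=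
      tendsto_pow_atTop_nhds_zero_of_lt_one (by positivity) (by rw [div_lt_one (by norm_num)]; exact hqlt)
    simpa using h1.const_mul (3 * B * (2 * Real.pi) / c)

/-- Example 5, asymptotics: for continuous `2π`-periodic `g₀, g₁, g₂, g₃`,
the contributions of `λ₀, λ₂, λ₃` vanish relative to `α_n`, while
`(1/α_{2n}) ∫ g₁ λ₁^{2n} → g₁(0) + g₁(π)` and
`(1/α_{2n-1}) ∫ g₁ λ₁^{2n-1} → g₁(0) - g₁(π)`. -/
theorem oqrw_example5_asymptotics
    (g₀ g₁ g₂ g₃ : ℝ → ℝ)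
    (hg₀ : Continuous g₀) (hg₁ : Continuous g₁) (hg₂ : Continuous g₂)
    (hg₃ : Continuous g₃)
    (hp₀ : Function.Periodic g₀ (2 * Real.pi)) (hp₁ : Function.Periodic g₁ (2 * Real.pi))
    (hp₂ : Function.Periodic g₂ (2 * Real.pi)) (hp₃ : Function.Periodic g₃ (2 * Real.pi)) :
    Tendsto (fun n : ℕ => ((alphaScale n : ℂ))⁻¹ *
        ∫ k in (-Real.pi)..Real.pi,
          ((g₀ k : ℂ) * ((lam0 k : ℂ)) ^ n + (g₂ k : ℂ) * lam2 k ^ n +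
            (g₃ k : ℂ) * lam3 k ^ n))
      atTop (nhds 0) ∧
    Tendsto (fun n : ℕ => (alphaScale (2 * n))⁻¹ *
        ∫ k in (-Real.pi)..Real.pi, g₁ k * lam1 k ^ (2 * n))
      atTop (nhds (g₁ 0 + g₁ Real.pi)) ∧
    Tendsto (fun n : ℕ => (alphaScale (2 * n - 1))⁻¹ *
        ∫ k in (-Real.pi)..Real.pi, g₁ k * lam1 k ^ (2 * n - 1))
      atTop (nhds (g₁ 0 - g₁ Real.pi)) := by
  refine ⟨part_zero g₀ g₂ g₃ hg₀ hg₂ hg₃, part_even g₁ hg₁ hp₁, part_odd g₁ hg₁ hp₁⟩
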